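/- Let a : T^d → ℝ be a nonnegative C^1 function on the d-dimensional torus. Then for every ε > 0 there exists a constant C_ε > 0 such that for all x ∈ T^d, |∇a(x)|² ≤ C_ε · a(x) + ε. -/

import Mathlib

open Real

/-- For a nonnegative C¹ periodic function `a` on the torus `(ℝ/2πℤ)^d`
(modeled as a `2π`-periodic function on `ℝ^d`), for every `ε > 0` there is
`C > 0` with `|∇a(x)|² ≤ C a(x) + ε` for all `x`. -/
theorem stmt0 (d : ℕ) (a : EuclideanSpace ℝ (Fin d) → ℝ)
    (ha : ContDiff ℝ 1 a) (hpos : ∀ x, 0 ≤ a x)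
    (hper : ∀ (x : EuclideanSpace ℝ (Fin d)) (i : Fin d),
      a (x + (2 * π) • EuclideanSpace.single i 1) = a x) :
    ∀ ε > 0, ∃ C > 0, ∀ x, ‖fderiv ℝ a x‖ ^ 2 ≤ C * a x + ε := by
  intro ε hε
  have hdiff : Differentiable ℝ a := ha.differentiable one_ne_zero
  -- fderiv is invariant under any translation that preserves `a`
  have hfd : ∀ (v : EuclideanSpace ℝ (Fin d)), (∀ y, a (y + v) = a y) →
      ∀ x, fderiv ℝ a (x + v) = fderiv ℝ a x := by
    intro v hv x
    have h1 : HasFDerivAt (fun y : EuclideanSpace ℝ (Fin d) => a (y + v))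
        (fderiv ℝ a (x + v)) x := by
      have h0 := (hdiff (x + v)).hasFDerivAt
      have h2 : HasFDerivAt (fun y : EuclideanSpace ℝ (Fin d) => y + v)
          (ContinuousLinearMap.id ℝ (EuclideanSpace ℝ (Fin d))) x :=
        (hasFDerivAt_id x).add_const v
      have h4 := h0.comp x h2
      simp only [ContinuousLinearMap.comp_id] at h4
      exact h4
    have h3 : (fun y : EuclideanSpace ℝ (Fin d) => a (y + v)) = a := funext hv
    rw [h3] at h1
    exact h1.fderiv.symm
  -- integer-multiple periodicity in one coordinate
  have hint : ∀ (k : ℤ) (i : Fin d) (y : EuclideanSpace ℝ (Fin d)),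
      a (y + ((k : ℝ) * (2 * π)) • EuclideanSpace.single i 1) = a y := by
    intro k i y
    set g : ℝ → ℝ := fun t => a (y + t • EuclideanSpace.single i 1) with hg
    have hgper : Function.Periodic g (2 * π) := by
      intro t
      have h1 : y + (t + 2 * π) • EuclideanSpace.single i (1:ℝ)
          = (y + t • EuclideanSpace.single i 1) + (2 * π) • EuclideanSpace.single i 1 := by
        rw [add_smul]; abel
      simp only [hg, h1, hper]
    have := hgper.int_mul_eq k
    simpa [hg] using this
  -- lattice periodicity
  have hlatt : ∀ (c : Fin d → ℤ) (y : EuclideanSpace ℝ (Fin d)),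
      a (y + ∑ i, ((c i : ℝ) * (2 * π)) • EuclideanSpace.single i 1) = a y := by
    intro c
    have key : ∀ s : Finset (Fin d), ∀ y : EuclideanSpace ℝ (Fin d),
        a (y + ∑ i ∈ s, ((c i : ℝ) * (2 * π)) • EuclideanSpace.single i (1:ℝ)) = a y := by
      intro s
      induction s using Finset.induction_on with
      | empty => intro y; simp
      | insert _ _ hj ih =>
        rename_i j s
        intro y
        rw [Finset.sum_insert hj]
        have h1 : y + (((c j : ℝ) * (2 * π)) • EuclideanSpace.single j (1:ℝ)
            + ∑ i ∈ s, ((c i : ℝ) * (2 * π)) • EuclideanSpace.single i (1:ℝ))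
            = (y + ((c j : ℝ) * (2 * π)) • EuclideanSpace.single j (1:ℝ))
            + ∑ i ∈ s, ((c i : ℝ) * (2 * π)) • EuclideanSpace.single i (1:ℝ) := by abel
        rw [h1, ih, hint]
    exact key Finset.univ
  have h2pi : (0:ℝ) < 2 * π := by positivity
  set R : ℝ := ((d : ℝ) + 1) * (2 * π) with hR
  -- reduction to a compact ball
  have hred : ∀ x : EuclideanSpace ℝ (Fin d), ∃ y : EuclideanSpace ℝ (Fin d),
      ‖y‖ ≤ R ∧ a y = a x ∧ fderiv ℝ a y = fderiv ℝ a x := by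
    intro x
    set c : Fin d → ℤ := fun i => ⌊x i / (2 * π)⌋ with hc
    set v : EuclideanSpace ℝ (Fin d) :=
      ∑ i, ((c i : ℝ) * (2 * π)) • EuclideanSpace.single i 1 with hv
    have hper' : ∀ y, a (y + v) = a y := fun y => by rw [hv]; exact hlatt c y
    have hxv : (x - v) + v = x := by abel
    refine ⟨x - v, ?_, ?_, ?_⟩
    · -- norm bound
      have hvi : ∀ i, v i = (c i : ℝ) * (2 * π) := by
        intro i
        rw [hv]
        have h1 : (∑ j, ((c j : ℝ) * (2 * π)) • EuclideanSpace.single j (1:ℝ)) i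
            = ∑ j, (((c j : ℝ) * (2 * π)) • EuclideanSpace.single j (1:ℝ)) i :=
          by rw [WithLp.ofLp_sum]; exact Finset.sum_apply i Finset.univ _
        rw [h1]
        simp [EuclideanSpace.single_apply]
      have hbound : ∀ i, |(x - v) i| ≤ 2 * π := by
        intro i
        have h1 : (x - v) i = x i - (c i : ℝ) * (2 * π) := by
          have : (x - v) i = x i - v i := rfl
          rw [this, hvi i]
        have h2 : 0 ≤ x i - (⌊x i / (2 * π)⌋ : ℝ) * (2 * π) :=
          Int.sub_floor_div_mul_nonneg (x i) h2pi
        have h3 : x i - (⌊x i / (2 * π)⌋ : ℝ) * (2 * π) < 2 * π :=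
          Int.sub_floor_div_mul_lt (x i) h2pi
        rw [h1, hc]
        rw [abs_of_nonneg h2]
        linarith
      rw [EuclideanSpace.norm_eq]
      have h1 : ∑ i, ‖(x - v) i‖ ^ 2 ≤ (d : ℝ) * ((2 * π) * (2 * π)) := by
        have h2 : ∀ i ∈ Finset.univ, ‖(x - v) i‖ ^ 2 ≤ (2 * π) * (2 * π) := by
          intro i _
          have := hbound i
          rw [Real.norm_eq_abs]
          nlinarith [abs_nonneg ((x - v) i)]
        calc ∑ i, ‖(x - v) i‖ ^ 2 ≤ ∑ _i : Fin d, (2 * π) * (2 * π) :=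
              Finset.sum_le_sum h2
          _ = (d : ℝ) * ((2 * π) * (2 * π)) := by
              rw [Finset.sum_const, Finset.card_univ, Fintype.card_fin, nsmul_eq_mul]
      have h2 : (d : ℝ) * ((2 * π) * (2 * π)) ≤ R ^ 2 := by
        rw [hR]; nlinarith [Nat.cast_nonneg (α := ℝ) d, h2pi]
      calc Real.sqrt (∑ i, ‖(x - v) i‖ ^ 2) ≤ Real.sqrt (R ^ 2) :=
            Real.sqrt_le_sqrt (h1.trans h2)
        _ = R := Real.sqrt_sq (by positivity)
    · conv_rhs => rw [← hxv]
      exact (hper' (x - v)).symm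
    · conv_rhs => rw [← hxv]
      exact (hfd v hper' (x - v)).symm
  -- continuity
  have hcont : Continuous fun x : EuclideanSpace ℝ (Fin d) => ‖fderiv ℝ a x‖ ^ 2 :=
    ((ha.continuous_fderiv one_ne_zero).norm).pow 2
  have hacont : Continuous a := ha.continuous
  -- main compactness argument by contradiction
  by_contra hcon
  push_neg at hcon
  set K : Set (EuclideanSpace ℝ (Fin d)) := Metric.closedBall 0 R with hK
  have hKc : IsCompact K := isCompact_closedBall 0 R
  set S : ℕ → Set (EuclideanSpace ℝ (Fin d)) :=
    fun n => {x ∈ K | (n : ℝ) * a x + ε ≤ ‖fderiv ℝ a x‖ ^ 2} with hS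
  have hSne : ∀ n, (S n).Nonempty := by
    intro n
    obtain ⟨x, hx⟩ := hcon ((n : ℝ) + 1) (by positivity)
    obtain ⟨y, hy1, hy2, hy3⟩ := hred x
    refine ⟨y, ?_, ?_⟩
    · simpa [hK, Metric.mem_closedBall, dist_zero_right] using hy1
    · rw [hy2, hy3]
      have hax := hpos x
      nlinarith [hx]
  have hScl : ∀ n, IsClosed (S n) := by
    intro n
    exact Metric.isClosed_closedBall.inter
      (isClosed_le ((continuous_const.mul hacont).add continuous_const) hcont)
  have hSmono : ∀ n, S (n + 1) ⊆ S n := by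
    intro n x hx
    refine ⟨hx.1, ?_⟩
    have h1 := hx.2
    have hax := hpos x
    push_cast at h1 ⊢
    nlinarith
  have hS0 : IsCompact (S 0) := hKc.of_isClosed_subset (hScl 0) (fun x hx => hx.1)
  obtain ⟨x, hx⟩ := IsCompact.nonempty_iInter_of_sequence_nonempty_isCompact_isClosed
    S hSmono hSne hS0 hScl
  have hxn : ∀ n : ℕ, (n : ℝ) * a x + ε ≤ ‖fderiv ℝ a x‖ ^ 2 :=
    fun n => (Set.mem_iInter.mp hx n).2
  have hax : a x = 0 := by
    by_contra h
    have hax : 0 < a x := lt_of_le_of_ne (hpos x) (Ne.symm h)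
    obtain ⟨n, hn⟩ := exists_nat_gt ((‖fderiv ℝ a x‖ ^ 2) / a x)
    have h1 := hxn n
    rw [div_lt_iff₀ hax] at hn
    nlinarith
  have hmin : IsLocalMin a x := by
    apply Filter.Eventually.of_forall
    intro y
    rw [hax]; exact hpos y
  have hz := hmin.fderiv_eq_zero
  have h0 := hxn 0
  rw [hz] at h0
  simp at h0
  linarith
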